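/- arXiv:1311.0198 — 6 statements merged into one kernel-verified Lean document; each statement's English description precedes it below -/
import Mathlib

section
/- Sort the bids in descending order of value and the asks in ascending order of value, and let k be the largest integer such that for every i ≤ k the i-th lowest ask's value is at most the i-th highest bid's value. The allocation that matches the i-th highest bid with the i-th lowest ask for i = 1,…,k maximizes social welfare among all feasible allocations. -/
/-- Extract the minimum-value unmatched ask from a list, with a fixed
tie-breaking rule (earlier list positions are preferred). Returns the
minimum together with the remaining list. -/
noncomputable def extractMin : List ℝ → Option (ℝ × List ℝ)
  | [] => none
  | a :: as =>
    match extractMin as with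
    | none => some (a, [])
    | some (m, rest) => if a ≤ m then some (a, as) else some (m, a :: rest)

/-- State of the Best-first (greedy) allocation: the currently unmatched asks,
the matched (ask, bid) pairs in match order, and the unmatched bids. -/
structure BfState where
  unmatchedAsks : List ℝ
  matched : List (ℝ × ℝ)
  unmatchedBids : List ℝ

/-- One step of the Best-first allocation: when bid `b` arrives, match it to the
minimum unmatched ask `a` if `a ≤ b`; otherwise leave `b` unmatched. -/
noncomputable def bfStep (s : BfState) (b : ℝ) : BfState :=
  match extractMin s.unmatchedAsks with
  | some (a, rest) =>
      if a ≤ b then ⟨rest, s.matched ++ [(a, b)], s.unmatchedBids⟩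
      else ⟨s.unmatchedAsks, s.matched, s.unmatchedBids ++ [b]⟩
  | none => ⟨s.unmatchedAsks, s.matched, s.unmatchedBids ++ [b]⟩

/-- Run the Best-first allocation on the bids in arrival order. -/
noncomputable def bfRun (asks bids : List ℝ) : BfState :=
  bids.foldl bfStep ⟨asks, [], []⟩

/-- Insertion into an ascending-sorted list. -/
noncomputable def insertAsc (x : ℝ) : List ℝ → List ℝ
  | [] => [x]
  | y :: ys => if x ≤ y then x :: y :: ys else y :: insertAsc x ys

/-- Sort a list of reals in ascending order. -/
noncomputable def sortAsc (l : List ℝ) : List ℝ := l.foldr insertAsc []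

/-- Sort a list of reals in descending order. -/
noncomputable def sortDesc (l : List ℝ) : List ℝ := (sortAsc l).reverse

/-- Match the i-th element of the first list with the i-th element of the
second, stopping as soon as a pair is not matchable (`a ≤ b` fails). -/
noncomputable def matchPrefix : List ℝ → List ℝ → List (ℝ × ℝ)
  | a :: as, b :: bs => if a ≤ b then (a, b) :: matchPrefix as bs else []
  | _, _ => []

/-- The optimal allocation: match the highest bid with the lowest ask, the
second highest bid with the second lowest ask, and so on, stopping as soon as
a pair is not matchable. -/
noncomputable def optPairs (asks bids : List ℝ) : List (ℝ × ℝ) :=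
  matchPrefix (sortAsc asks) (sortDesc bids)

/-- A feasible allocation: a partial matching (multiset of (ask, bid) pairs)
using each ask and each bid at most once, with `a ≤ b` for every matched pair. -/
def IsFeasible (asks bids : List ℝ) (M : Multiset (ℝ × ℝ)) : Prop :=
  M.map Prod.fst ≤ (asks : Multiset ℝ) ∧
  M.map Prod.snd ≤ (bids : Multiset ℝ) ∧
  ∀ p ∈ M, p.1 ≤ p.2

/-- Social welfare of an allocation: sum of matched bid values plus the sum of
the values of the unmatched asks. -/
noncomputable def welfare (asks : List ℝ) (M : Multiset (ℝ × ℝ)) : ℝ :=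
  (M.map Prod.snd).sum + ((asks : Multiset ℝ) - M.map Prod.fst).sum

/-- Social welfare of the Best-first allocation. -/
noncomputable def bfWelfare (asks bids : List ℝ) : ℝ :=
  ((bfRun asks bids).matched.map Prod.snd).sum + (bfRun asks bids).unmatchedAsks.sum

/-- Maximum social welfare over all feasible allocations. -/
noncomputable def OptW (asks bids : List ℝ) : ℝ :=
  sSup {w : ℝ | ∃ M : Multiset (ℝ × ℝ), IsFeasible asks bids M ∧ w = welfare asks M}


section Aux

lemma insertAsc_eq (x : ℝ) (l : List ℝ) :
    insertAsc x l = List.orderedInsert (· ≤ ·) x l := by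
  induction l with
  | nil => rfl
  | cons y ys ih => simp [insertAsc, List.orderedInsert, ih]

lemma sortAsc_eq (l : List ℝ) : sortAsc l = List.insertionSort (· ≤ ·) l := by
  induction l with
  | nil => rfl
  | cons a l ih =>
    simp [sortAsc, List.insertionSort, insertAsc_eq] at *
    simp [ih]

lemma sortAsc_perm (l : List ℝ) : (sortAsc l).Perm l := by
  rw [sortAsc_eq]; exact List.perm_insertionSort _ l

lemma sortAsc_sorted (l : List ℝ) : (sortAsc l).Pairwise (· ≤ ·) := by
  rw [sortAsc_eq]; exact List.pairwise_insertionSort _ l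

lemma sortDesc_perm (l : List ℝ) : (sortDesc l).Perm l :=
  (List.reverse_perm _).trans (sortAsc_perm l)

lemma sortDesc_sorted (l : List ℝ) : (sortDesc l).Pairwise (fun x y => y ≤ x) := by
  rw [sortDesc, List.pairwise_reverse]
  exact sortAsc_sorted l

lemma matchPrefix_fst_prefix : ∀ (A B : List ℝ), ((matchPrefix A B).map Prod.fst) <+: A
  | [], _ => by simp [matchPrefix]
  | a :: as, [] => by simp [matchPrefix]
  | a :: as, b :: bs => by
    rw [matchPrefix]
    split
    · obtain ⟨t, ht⟩ := matchPrefix_fst_prefix as bs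
      exact ⟨t, by simp [ht]⟩
    · simp

lemma matchPrefix_snd_prefix : ∀ (A B : List ℝ), ((matchPrefix A B).map Prod.snd) <+: B
  | [], _ => by simp [matchPrefix]
  | a :: as, [] => by simp [matchPrefix]
  | a :: as, b :: bs => by
    rw [matchPrefix]
    split
    · obtain ⟨t, ht⟩ := matchPrefix_snd_prefix as bs
      exact ⟨t, by simp [ht]⟩
    · simp

lemma matchPrefix_le : ∀ (A B : List ℝ), ∀ p ∈ matchPrefix A B, p.1 ≤ p.2
  | [], _ => by simp [matchPrefix]
  | a :: as, [] => by simp [matchPrefix]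
  | a :: as, b :: bs => by
    rw [matchPrefix]
    split
    · rintro p hp
      rcases List.mem_cons.1 hp with h | h
      · subst h; assumption
      · exact matchPrefix_le as bs p h
    · simp

lemma matchPrefix_sum_nonneg (A B : List ℝ) :
    0 ≤ ((matchPrefix A B).map (fun p => p.2 - p.1)).sum := by
  apply List.sum_nonneg
  intro x hx
  rcases List.mem_map.1 hx with ⟨p, hp, rfl⟩
  have := matchPrefix_le A B p hp
  linarith

/-- sum of a sub-multiset of size m of a descending-sorted list is at most
the sum of the first m elements. -/
lemma sum_le_sum_take (B : List ℝ) (hB : B.Pairwise (fun x y => y ≤ x))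
    (S : Multiset ℝ) (hS : S ≤ ↑B) :
    S.sum ≤ (B.take (Multiset.card S)).sum := by
  induction B generalizing S with
  | nil =>
    have : S = 0 := le_antisymm (by simpa using hS) (zero_le)
    simp [this]
  | cons b B' ih =>
    have hB' : B'.Pairwise (fun x y => y ≤ x) := hB.of_cons
    by_cases hb : b ∈ S
    · have h1 : S.erase b ≤ ↑B' := by
        have := Multiset.erase_le_erase b hS
        simpa using this
      have hcard : Multiset.card S = Multiset.card (S.erase b) + 1 := by
        rw [Multiset.card_erase_of_mem hb]
        rw [Nat.pred_eq_sub_one]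
        have : 0 < Multiset.card S := Multiset.card_pos_iff_exists_mem.2 ⟨b, hb⟩
        omega
      have hS' : S = b ::ₘ S.erase b := (Multiset.cons_erase hb).symm
      calc S.sum = b + (S.erase b).sum := by rw [hS']; simp
        _ ≤ b + (B'.take (Multiset.card (S.erase b))).sum := by
            linarith [ih hB' _ h1]
        _ = ((b :: B').take (Multiset.card S)).sum := by
            rw [hcard]; simp
    · have h1 : S ≤ ↑B' := by
        rw [Multiset.le_iff_count]
        intro x
        have := Multiset.le_iff_count.1 hS x
        rcases eq_or_ne x b with rfl | hxb
        · simp [Multiset.count_eq_zero_of_notMem hb]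
        · simpa [Multiset.count_cons, List.count_cons, beq_iff_eq, Ne.symm hxb] using this
      have hm : Multiset.card S ≤ B'.length := by
        simpa using Multiset.card_le_card h1
      have key := ih hB' S h1
      rcases Nat.eq_zero_or_pos (Multiset.card S) with h0 | hpos
      · have : S = 0 := by
          rwa [Multiset.card_eq_zero] at h0
        simp [this]
      · obtain ⟨m, hm1⟩ : ∃ m, Multiset.card S = m + 1 :=
          ⟨Multiset.card S - 1, by omega⟩
        have hlt : m < B'.length := by omega
        have hBm : B'[m] ≤ b := by
          have := List.pairwise_cons.1 hB
          exact this.1 _ (List.getElem_mem hlt)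
        have : (B'.take (m+1)).sum = (B'.take m).sum + B'[m] :=
          List.sum_take_succ B' m hlt
        calc S.sum ≤ (B'.take (Multiset.card S)).sum := key
          _ = (B'.take m).sum + B'[m] := by rw [hm1, this]
          _ ≤ b + (B'.take m).sum := by linarith
          _ = ((b :: B').take (Multiset.card S)).sum := by rw [hm1]; simp

/-- the sum of the first m elements of an ascending-sorted list is at most the
sum of any sub-multiset of size m. -/
lemma sum_take_le_sum (A : List ℝ) (hA : A.Pairwise (· ≤ ·))
    (S : Multiset ℝ) (hS : S ≤ ↑A) :
    (A.take (Multiset.card S)).sum ≤ S.sum := by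
  induction A generalizing S with
  | nil =>
    have : S = 0 := le_antisymm (by simpa using hS) (zero_le)
    simp [this]
  | cons a A' ih =>
    have hA' : A'.Pairwise (· ≤ ·) := hA.of_cons
    by_cases hb : a ∈ S
    · have h1 : S.erase a ≤ ↑A' := by
        have := Multiset.erase_le_erase a hS
        simpa using this
      have hcard : Multiset.card S = Multiset.card (S.erase a) + 1 := by
        rw [Multiset.card_erase_of_mem hb]
        rw [Nat.pred_eq_sub_one]
        have : 0 < Multiset.card S := Multiset.card_pos_iff_exists_mem.2 ⟨a, hb⟩
        omega
      have hS' : S = a ::ₘ S.erase a := (Multiset.cons_erase hb).symm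
      calc ((a :: A').take (Multiset.card S)).sum
          = a + (A'.take (Multiset.card (S.erase a))).sum := by rw [hcard]; simp
        _ ≤ a + (S.erase a).sum := by linarith [ih hA' _ h1]
        _ = S.sum := by rw [hS']; simp
    · have h1 : S ≤ ↑A' := by
        rw [Multiset.le_iff_count]
        intro x
        have := Multiset.le_iff_count.1 hS x
        rcases eq_or_ne x a with rfl | hxa
        · simp [Multiset.count_eq_zero_of_notMem hb]
        · simpa [Multiset.count_cons, List.count_cons, beq_iff_eq, Ne.symm hxa] using this
      have hm : Multiset.card S ≤ A'.length := by
        simpa using Multiset.card_le_card h1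
      have key := ih hA' S h1
      rcases Nat.eq_zero_or_pos (Multiset.card S) with h0 | hpos
      · have : S = 0 := by rwa [Multiset.card_eq_zero] at h0
        simp [this]
      · obtain ⟨m, hm1⟩ : ∃ m, Multiset.card S = m + 1 :=
          ⟨Multiset.card S - 1, by omega⟩
        have hlt : m < A'.length := by omega
        have hBm : a ≤ A'[m] := by
          have := List.pairwise_cons.1 hA
          exact this.1 _ (List.getElem_mem hlt)
        have hsum : (A'.take (m+1)).sum = (A'.take m).sum + A'[m] :=
          List.sum_take_succ A' m hlt
        calc ((a :: A').take (Multiset.card S)).sum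
            = a + (A'.take m).sum := by rw [hm1]; simp
          _ ≤ (A'.take m).sum + A'[m] := by linarith
          _ = (A'.take (Multiset.card S)).sum := by rw [hm1, hsum]
          _ ≤ S.sum := key

lemma take_sub_le_matchPrefix : ∀ (A B : List ℝ), A.Pairwise (· ≤ ·) →
    B.Pairwise (fun x y => y ≤ x) → ∀ m : ℕ, m ≤ A.length → m ≤ B.length →
    (B.take m).sum - (A.take m).sum ≤
      ((matchPrefix A B).map (fun p => p.2 - p.1)).sum
  | A, B, hA, hB, 0, _, _ => by
    simpa using matchPrefix_sum_nonneg A B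
  | [], B, hA, hB, m+1, hmA, hmB => by simp at hmA
  | a :: as, [], hA, hB, m+1, hmA, hmB => by simp at hmB
  | a :: as, b :: bs, hA, hB, m+1, hmA, hmB => by
    rw [matchPrefix]
    split
    · rename_i hab
      have ih := take_sub_le_matchPrefix as bs hA.of_cons hB.of_cons m
        (by simpa using hmA) (by simpa using hmB)
      simp only [List.take_succ_cons, List.sum_cons, List.map_cons]
      linarith
    · rename_i hab
      push_neg at hab
      -- all elements of the takes: bids ≤ b < a ≤ asks
      have hb' : ∀ x ∈ (b :: bs).take (m+1), x ≤ b := by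
        intro x hx
        have hx' := List.mem_of_mem_take hx
        rcases List.mem_cons.1 hx' with rfl | h
        · exact le_refl x
        · exact (List.pairwise_cons.1 hB).1 x h
      have ha' : ∀ x ∈ (a :: as).take (m+1), a ≤ x := by
        intro x hx
        have hx' := List.mem_of_mem_take hx
        rcases List.mem_cons.1 hx' with rfl | h
        · exact le_refl x
        · exact (List.pairwise_cons.1 hA).1 x h
      have lb : ((b :: bs).take (m+1)).length = m + 1 := by
        rw [List.length_take]; omega
      have la : ((a :: as).take (m+1)).length = m + 1 := by
        rw [List.length_take]; omega
      have h1 : ((b :: bs).take (m+1)).sum ≤ (m+1 : ℕ) • b := by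
        have h := List.sum_le_card_nsmul ((b :: bs).take (m+1)) b hb'
        rwa [lb] at h
      have h2 : (m+1 : ℕ) • a ≤ ((a :: as).take (m+1)).sum := by
        have h := List.card_nsmul_le_sum ((a :: as).take (m+1)) a ha'
        rwa [la] at h
      have : (m+1 : ℕ) • b ≤ (m+1 : ℕ) • a := by
        apply nsmul_le_nsmul_right hab.le
      simp only [List.map_nil, List.sum_nil]
      linarith

lemma list_sum_map_sub (l : List (ℝ × ℝ)) :
    (l.map (fun p => p.2 - p.1)).sum = (l.map Prod.snd).sum - (l.map Prod.fst).sum := by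
  induction l with
  | nil => simp
  | cons p l ih => simp [ih]; ring

lemma welfare_eq (asks : List ℝ) (M : Multiset (ℝ × ℝ))
    (h : M.map Prod.fst ≤ ↑asks) :
    welfare asks M = (asks : Multiset ℝ).sum + ((M.map Prod.snd).sum - (M.map Prod.fst).sum) := by
  rw [welfare]
  have := tsub_add_cancel_of_le h
  have hsum : ((asks : Multiset ℝ) - M.map Prod.fst).sum + (M.map Prod.fst).sum
      = (asks : Multiset ℝ).sum := by
    rw [← Multiset.sum_add, this]
  linarith

end Aux

/-- The allocation matching the i-th highest bid with the
i-th lowest ask, for i = 1,…,k (k the largest integer such that each such pair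
is matchable), is feasible and maximizes social welfare among all feasible
allocations. -/
theorem optPairs_maximizes_welfare (asks bids : List ℝ)
    (ha : ∀ a ∈ asks, 0 ≤ a) (hb : ∀ b ∈ bids, 0 ≤ b) :
    IsFeasible asks bids ↑(optPairs asks bids) ∧
    ∀ M : Multiset (ℝ × ℝ), IsFeasible asks bids M →
      welfare asks M ≤ welfare asks ↑(optPairs asks bids) := by
  set A := sortAsc asks with hAdef
  set B := sortDesc bids with hBdef
  have hAperm : (↑A : Multiset ℝ) = ↑asks := Multiset.coe_eq_coe.2 (sortAsc_perm asks)
  have hBperm : (↑B : Multiset ℝ) = ↑bids := Multiset.coe_eq_coe.2 (sortDesc_perm bids)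
  have hAs : A.Pairwise (· ≤ ·) := sortAsc_sorted asks
  have hBs : B.Pairwise (fun x y => y ≤ x) := sortDesc_sorted bids
  have hfstpre := matchPrefix_fst_prefix A B
  have hsndpre := matchPrefix_snd_prefix A B
  have hfst : (↑(optPairs asks bids) : Multiset (ℝ × ℝ)).map Prod.fst ≤ ↑asks := by
    rw [optPairs, ← hAperm, ← hBdef, ← hAdef]
    rw [Multiset.map_coe]
    exact Multiset.coe_le.2 hfstpre.sublist.subperm
  have hsnd : (↑(optPairs asks bids) : Multiset (ℝ × ℝ)).map Prod.snd ≤ ↑bids := by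
    rw [optPairs, ← hBperm, ← hBdef, ← hAdef]
    rw [Multiset.map_coe]
    exact Multiset.coe_le.2 hsndpre.sublist.subperm
  refine ⟨⟨hfst, hsnd, ?_⟩, ?_⟩
  · intro p hp
    exact matchPrefix_le A B p (by simpa [optPairs, hAdef, hBdef] using hp)
  · intro M hM
    obtain ⟨hMf, hMs, _⟩ := hM
    rw [welfare_eq asks M hMf, welfare_eq asks _ hfst]
    have hMf' : M.map Prod.fst ≤ ↑A := by rw [hAperm]; exact hMf
    have hMs' : M.map Prod.snd ≤ ↑B := by rw [hBperm]; exact hMs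
    set m := Multiset.card M with hmdef
    have hcardf : Multiset.card (M.map Prod.fst) = m := by simp [hmdef]
    have hcards : Multiset.card (M.map Prod.snd) = m := by simp [hmdef]
    have hmA : m ≤ A.length := by
      have := Multiset.card_le_card hMf'
      simpa [hcardf] using this
    have hmB : m ≤ B.length := by
      have := Multiset.card_le_card hMs'
      simpa [hcards] using this
    have h1 : (M.map Prod.snd).sum ≤ (B.take m).sum := by
      have := sum_le_sum_take B hBs (M.map Prod.snd) hMs'
      rwa [hcards] at this
    have h2 : (A.take m).sum ≤ (M.map Prod.fst).sum := by
      have := sum_take_le_sum A hAs (M.map Prod.fst) hMf'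
      rwa [hcardf] at this
    have h3 := take_sub_le_matchPrefix A B hAs hBs m hmA hmB
    have h4 : ((matchPrefix A B).map (fun p => p.2 - p.1)).sum
        = ((matchPrefix A B).map Prod.snd).sum - ((matchPrefix A B).map Prod.fst).sum :=
      list_sum_map_sub _
    have h5 : ((↑(optPairs asks bids) : Multiset (ℝ × ℝ)).map Prod.snd).sum
        = ((matchPrefix A B).map Prod.snd).sum := by
      rw [optPairs, ← hBdef, ← hAdef, Multiset.map_coe, Multiset.sum_coe]
    have h6 : ((↑(optPairs asks bids) : Multiset (ℝ × ℝ)).map Prod.fst).sum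
        = ((matchPrefix A B).map Prod.fst).sum := by
      rw [optPairs, ← hBdef, ← hAdef, Multiset.map_coe, Multiset.sum_coe]
    rw [h5, h6]
    linarith
end

section
/- If the number of bids is at most the number of asks (demand does not exceed supply), then the Best-first allocation is 2-competitive: its social welfare is at least half of the maximum social welfare over all feasible allocations, i.e., W(Bf) ≥ W(Opt)/2. -/
section Aux

lemma extractMin_none {l : List ℝ} (h : extractMin l = none) : l = [] := by
  cases l with
  | nil => rfl
  | cons a as =>
    rw [extractMin] at h
    split at h
    · exact absurd h (by simp)
    · split at h <;> exact absurd h (by simp)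

lemma extractMin_spec {l : List ℝ} {m : ℝ} {rest : List ℝ}
    (h : extractMin l = some (m, rest)) :
    (m ::ₘ (rest : Multiset ℝ) = (l : Multiset ℝ)) ∧ ∀ x ∈ l, m ≤ x := by
  induction l generalizing m rest with
  | nil => simp [extractMin] at h
  | cons a as ih =>
    rw [extractMin] at h
    split at h
    next hm =>
      have has : as = [] := extractMin_none hm
      simp only [Option.some.injEq, Prod.mk.injEq] at h
      obtain ⟨rfl, rfl⟩ := h
      subst has
      exact ⟨by simp, by intro x hx; simp at hx; subst hx; exact le_refl _⟩
    next m' rest' hm =>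
      obtain ⟨hmul, hmin⟩ := ih hm
      split at h
      next hle =>
        simp only [Option.some.injEq, Prod.mk.injEq] at h
        obtain ⟨rfl, rfl⟩ := h
        refine ⟨by simp, ?_⟩
        intro x hx
        rcases List.mem_cons.mp hx with rfl | hx
        · exact le_refl _
        · exact le_trans hle (hmin x hx)
      next hle =>
        simp only [Option.some.injEq, Prod.mk.injEq] at h
        obtain ⟨rfl, rfl⟩ := h
        constructor
        · have hc : ((a :: rest' : List ℝ) : Multiset ℝ) = a ::ₘ (rest' : Multiset ℝ) := by simp
          rw [hc, Multiset.cons_swap, hmul]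
          simp
        · intro x hx
          rcases List.mem_cons.mp hx with rfl | hx
          · exact le_of_lt (lt_of_not_ge hle)
          · exact hmin x hx

/-- Invariant maintained by the Best-first allocation. -/
def BfInv (A B : Multiset ℝ) (s : BfState) : Prop :=
  ((s.matched.map Prod.fst : Multiset ℝ) + (s.unmatchedAsks : Multiset ℝ) = A) ∧
  ((s.matched.map Prod.snd : Multiset ℝ) + (s.unmatchedBids : Multiset ℝ) = B) ∧
  (∀ p ∈ s.matched, p.1 ≤ p.2) ∧
  (∀ b ∈ s.unmatchedBids, ∀ a ∈ s.unmatchedAsks, b ≤ a)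

lemma bfStep_none {s : BfState} {b : ℝ} (h : extractMin s.unmatchedAsks = none) :
    bfStep s b = ⟨s.unmatchedAsks, s.matched, s.unmatchedBids ++ [b]⟩ := by
  unfold bfStep; rw [h]

lemma bfStep_pos {s : BfState} {b a : ℝ} {rest : List ℝ}
    (h : extractMin s.unmatchedAsks = some (a, rest)) (hab : a ≤ b) :
    bfStep s b = ⟨rest, s.matched ++ [(a, b)], s.unmatchedBids⟩ := by
  unfold bfStep; rw [h]; simp [hab]

lemma bfStep_neg {s : BfState} {b a : ℝ} {rest : List ℝ}
    (h : extractMin s.unmatchedAsks = some (a, rest)) (hab : ¬ a ≤ b) :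
    bfStep s b = ⟨s.unmatchedAsks, s.matched, s.unmatchedBids ++ [b]⟩ := by
  unfold bfStep; rw [h]; simp [hab]

lemma bfInv_step {A B : Multiset ℝ} {s : BfState} (h : BfInv A B s) (b : ℝ) :
    BfInv A (B + {b}) (bfStep s b) := by
  obtain ⟨h1, h2, h3, h4⟩ := h
  cases hm : extractMin s.unmatchedAsks with
  | none =>
    have he : s.unmatchedAsks = [] := extractMin_none hm
    rw [bfStep_none hm]
    refine ⟨h1, ?_, h3, ?_⟩
    · show ((s.matched.map Prod.snd : List ℝ) : Multiset ℝ)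
        + ((s.unmatchedBids ++ [b] : List ℝ) : Multiset ℝ) = B + {b}
      rw [← h2, ← Multiset.coe_add, add_assoc]
      congr 1
    · intro b' hb' a' ha'
      simp only [he, List.not_mem_nil] at ha'
  | some p =>
    obtain ⟨a, rest⟩ := p
    obtain ⟨hmul, hmin⟩ := extractMin_spec hm
    by_cases hab : a ≤ b
    · rw [bfStep_pos hm hab]
      refine ⟨?_, ?_, ?_, ?_⟩
      · show (((s.matched ++ [(a, b)]).map Prod.fst : List ℝ) : Multiset ℝ)
          + (rest : Multiset ℝ) = A
        rw [← h1, ← hmul]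
        rw [List.map_append, ← Multiset.coe_add]
        simp [add_comm, add_assoc, add_left_comm, ← Multiset.singleton_add]
      · show (((s.matched ++ [(a, b)]).map Prod.snd : List ℝ) : Multiset ℝ)
          + (s.unmatchedBids : Multiset ℝ) = B + {b}
        rw [← h2]
        rw [List.map_append, ← Multiset.coe_add]
        simp [add_comm, add_assoc, add_left_comm]
      · intro p hp
        simp only [List.mem_append, List.mem_singleton] at hp
        rcases hp with hp | rfl
        · exact h3 p hp
        · exact hab
      · intro b' hb' a' ha'
        have ha2 : a' ∈ s.unmatchedAsks := by
          have : (a' : ℝ) ∈ (s.unmatchedAsks : Multiset ℝ) := by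
            rw [← hmul]
            exact Multiset.mem_cons_of_mem (by simpa using ha')
          simpa using this
        exact h4 b' hb' a' ha2
    · rw [bfStep_neg hm hab]
      refine ⟨h1, ?_, h3, ?_⟩
      · show ((s.matched.map Prod.snd : List ℝ) : Multiset ℝ)
          + ((s.unmatchedBids ++ [b] : List ℝ) : Multiset ℝ) = B + {b}
        rw [← h2, ← Multiset.coe_add, add_assoc]
        congr 1
      · intro b' hb' a' ha'
        simp only [List.mem_append, List.mem_singleton] at hb'
        rcases hb' with hb' | rfl
        · exact h4 b' hb' a' ha'
        · exact le_trans (le_of_lt (lt_of_not_ge hab)) (hmin a' ha')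

lemma bfInv_foldl {A : Multiset ℝ} (bids : List ℝ) :
    ∀ (B : Multiset ℝ) (s : BfState), BfInv A B s →
      BfInv A (B + (bids : Multiset ℝ)) (bids.foldl bfStep s) := by
  induction bids with
  | nil => intro B s h; simpa using h
  | cons b bs ih =>
    intro B s h
    have := ih (B + {b}) (bfStep s b) (bfInv_step h b)
    simp only [List.foldl_cons]
    have he : B + ((b :: bs : List ℝ) : Multiset ℝ) = B + {b} + (bs : Multiset ℝ) := by
      rw [← Multiset.cons_coe, ← Multiset.singleton_add, ← add_assoc]
    rw [he]
    exact this

lemma bfRun_inv (asks bids : List ℝ) :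
    BfInv (asks : Multiset ℝ) (bids : Multiset ℝ) (bfRun asks bids) := by
  have h0 : BfInv (asks : Multiset ℝ) (0 : Multiset ℝ) ⟨asks, [], []⟩ := by
    refine ⟨by simp, by simp, ?_, ?_⟩ <;> simp
  have := bfInv_foldl bids 0 ⟨asks, [], []⟩ h0
  simpa [bfRun] using this

lemma msum_nonneg {s : Multiset ℝ} (h : ∀ x ∈ s, 0 ≤ x) : 0 ≤ s.sum :=
  Multiset.sum_nonneg h

lemma msum_le_of_le {s t : Multiset ℝ} (h : s ≤ t) (ht : ∀ x ∈ t, 0 ≤ x) :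
    s.sum ≤ t.sum := by
  obtain ⟨u, rfl⟩ := Multiset.le_iff_exists_add.mp h
  rw [Multiset.sum_add]
  have : 0 ≤ u.sum := msum_nonneg fun x hx => ht x (by simp [hx])
  linarith

lemma list_sum_le (U : List ℝ) : ∀ (V : List ℝ), (∀ y ∈ V, 0 ≤ y) →
    (∀ x ∈ U, ∀ y ∈ V, x ≤ y) → U.length ≤ V.length → U.sum ≤ V.sum := by
  induction U with
  | nil => intro V hV _ _; simpa using List.sum_nonneg hV
  | cons x U ih =>
    intro V hV hUV hlen
    cases V with
    | nil => simp at hlen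
    | cons y V =>
      simp only [List.sum_cons]
      have h1 : x ≤ y := hUV x (by simp) y (by simp)
      have h2 : U.sum ≤ V.sum := by
        refine ih V (fun z hz => hV z (by simp [hz]))
          (fun a ha c hc => hUV a (by simp [ha]) c (by simp [hc])) (by simpa using hlen)
      linarith

lemma bf_welfare_bound (asks bids : List ℝ)
    (ha : ∀ a ∈ asks, 0 ≤ a) (hb : ∀ b ∈ bids, 0 ≤ b)
    (hlen : bids.length ≤ asks.length)
    (M : Multiset (ℝ × ℝ)) (hM : IsFeasible asks bids M) :
    welfare asks M ≤ 2 * bfWelfare asks bids := by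
  obtain ⟨h1, h2, h3, h4⟩ := bfRun_inv asks bids
  set F := bfRun asks bids with hF
  set Fa : Multiset ℝ := ((F.matched.map Prod.fst : List ℝ) : Multiset ℝ) with hFa
  set Fb : Multiset ℝ := ((F.matched.map Prod.snd : List ℝ) : Multiset ℝ) with hFb
  set Ua : Multiset ℝ := (F.unmatchedAsks : Multiset ℝ) with hUa
  set Ub : Multiset ℝ := (F.unmatchedBids : Multiset ℝ) with hUb
  obtain ⟨hMa, hMb, hMle⟩ := hM
  have hbidsnn : ∀ x ∈ (bids : Multiset ℝ), 0 ≤ x := by simpa using hb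
  have hasksnn : ∀ x ∈ (asks : Multiset ℝ), 0 ≤ x := by simpa using ha
  have hFb_le : Fb ≤ (bids : Multiset ℝ) := by rw [← h2]; exact self_le_add_right _ _
  have hUb_le : Ub ≤ (bids : Multiset ℝ) := by rw [← h2]; exact self_le_add_left _ _
  have hFa_le : Fa ≤ (asks : Multiset ℝ) := by rw [← h1]; exact self_le_add_right _ _
  have hUa_le : Ua ≤ (asks : Multiset ℝ) := by rw [← h1]; exact self_le_add_left _ _
  have e1 : (bids : Multiset ℝ) - Fb = Ub := by rw [← h2, add_tsub_cancel_left]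
  have e2 : (asks : Multiset ℝ) - Ua = Fa := by rw [← h1, add_tsub_cancel_right]
  -- length comparison
  have hcard : F.unmatchedBids.length ≤ F.unmatchedAsks.length := by
    have c1 := congrArg Multiset.card h1
    have c2 := congrArg Multiset.card h2
    simp only [hFa, hFb, hUa, hUb, Multiset.card_add, Multiset.coe_card,
      List.length_map] at c1 c2
    omega
  have hUbUa : Ub.sum ≤ Ua.sum := by
    have hVnn : ∀ y ∈ F.unmatchedAsks, 0 ≤ y := by
      intro y hy
      exact hasksnn y (Multiset.mem_of_le hUa_le (by simpa [hUa] using hy))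
    have := list_sum_le F.unmatchedBids F.unmatchedAsks hVnn h4 hcard
    simpa [hUa, hUb] using this
  have hFaFb : Fa.sum ≤ Fb.sum := by
    simp only [hFa, hFb, Multiset.sum_coe]
    exact List.sum_le_sum (fun p hp => h3 p hp)
  -- key bound 1 : matched bids of M
  have key1 : (M.map Prod.snd).sum ≤ Fb.sum + Ua.sum := by
    have hd : M.map Prod.snd - Fb + (M.map Prod.snd) ∩ Fb = M.map Prod.snd :=
      Multiset.sub_add_inter _ _
    have s1 : ((M.map Prod.snd) ∩ Fb).sum ≤ Fb.sum :=
      msum_le_of_le Multiset.inter_le_right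
        (fun x hx => hbidsnn x (Multiset.mem_of_le hFb_le hx))
    have s2 : (M.map Prod.snd - Fb).sum ≤ Ua.sum := by
      have hle : M.map Prod.snd - Fb ≤ Ub := by
        rw [← e1]; exact tsub_le_tsub_right hMb _
      have := msum_le_of_le hle (fun x hx => hbidsnn x (Multiset.mem_of_le hUb_le hx))
      linarith
    calc (M.map Prod.snd).sum
        = (M.map Prod.snd - Fb).sum + ((M.map Prod.snd) ∩ Fb).sum := by
          rw [← Multiset.sum_add, hd]
      _ ≤ Fb.sum + Ua.sum := by linarith
  -- key bound 2 : unmatched asks of M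
  have key2 : ((asks : Multiset ℝ) - M.map Prod.fst).sum ≤ Ua.sum + Fb.sum := by
    set X : Multiset ℝ := (asks : Multiset ℝ) - M.map Prod.fst with hX
    have hXle : X ≤ (asks : Multiset ℝ) := tsub_le_self
    have hd : X - Ua + X ∩ Ua = X := Multiset.sub_add_inter _ _
    have s1 : (X ∩ Ua).sum ≤ Ua.sum :=
      msum_le_of_le Multiset.inter_le_right
        (fun x hx => hasksnn x (Multiset.mem_of_le hUa_le hx))
    have s2 : (X - Ua).sum ≤ Fb.sum := by
      have hle : X - Ua ≤ Fa := by
        rw [← e2]; exact tsub_le_tsub_right hXle _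
      have := msum_le_of_le hle (fun x hx => hasksnn x (Multiset.mem_of_le hFa_le hx))
      linarith
    calc X.sum = (X - Ua).sum + (X ∩ Ua).sum := by rw [← Multiset.sum_add, hd]
      _ ≤ Ua.sum + Fb.sum := by linarith
  have hbfw : bfWelfare asks bids = Fb.sum + Ua.sum := by
    simp [bfWelfare, hFb, hUa, ← hF, Multiset.sum_coe]
  unfold welfare
  rw [hbfw]
  linarith

lemma bfWelfare_nonneg (asks bids : List ℝ)
    (ha : ∀ a ∈ asks, 0 ≤ a) (hb : ∀ b ∈ bids, 0 ≤ b) :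
    0 ≤ bfWelfare asks bids := by
  obtain ⟨h1, h2, h3, h4⟩ := bfRun_inv asks bids
  have s1 : 0 ≤ ((bfRun asks bids).matched.map Prod.snd).sum := by
    apply List.sum_nonneg
    intro x hx
    have : (x : ℝ) ∈ (bids : Multiset ℝ) := by
      rw [← h2]
      refine Multiset.mem_of_le (self_le_add_right _ _) ?_
      simpa using hx
    exact hb x (by simpa using this)
  have s2 : 0 ≤ (bfRun asks bids).unmatchedAsks.sum := by
    apply List.sum_nonneg
    intro x hx
    have : (x : ℝ) ∈ (asks : Multiset ℝ) := by
      rw [← h1]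
      refine Multiset.mem_of_le (self_le_add_left _ _) ?_
      simpa using hx
    exact ha x (by simpa using this)
  unfold bfWelfare
  linarith

end Aux

/-- If the number of bids is at most the number of asks, then
the Best-first allocation is 2-competitive: `W(Bf) ≥ W(Opt)/2`. -/
theorem bf_two_competitive (asks bids : List ℝ)
    (ha : ∀ a ∈ asks, 0 ≤ a) (hb : ∀ b ∈ bids, 0 ≤ b)
    (hlen : bids.length ≤ asks.length) :
    OptW asks bids / 2 ≤ bfWelfare asks bids := by
  have hnn := bfWelfare_nonneg asks bids ha hb
  rw [div_le_iff₀ (by norm_num : (0:ℝ) < 2)]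
  apply Real.sSup_le
  · rintro w ⟨M, hM, rfl⟩
    have := bf_welfare_bound asks bids ha hb hlen M hM
    linarith
  · linarith
end

section
/- After the Best-first allocation has processed all bids, every ask left unmatched has value strictly greater than the value of every bid left unmatched. -/
lemma extractMin_eq_none {l : List ℝ} : extractMin l = none ↔ l = [] := by
  cases l with
  | nil => simp [extractMin]
  | cons a as =>
    simp only [extractMin]
    rcases extractMin as with _ | ⟨m, rest⟩ <;> simp
    split <;> simp

lemma extractMin_min : ∀ {l : List ℝ} {m : ℝ} {rest : List ℝ},
    extractMin l = some (m, rest) → ∀ x ∈ l, m ≤ x := by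
  intro l
  induction l with
  | nil => intro m rest h; simp [extractMin] at h
  | cons a as ih =>
    intro m rest h x hx
    rw [List.mem_cons] at hx
    rw [extractMin] at h
    rcases hem : extractMin as with _ | ⟨m', rest'⟩ <;> rw [hem] at h <;> dsimp only at h
    · have has : as = [] := extractMin_eq_none.mp hem
      simp at h
      rcases hx with hx | hx
      · exact le_of_eq (h.1 ▸ hx ▸ rfl)
      · rw [has] at hx; simp at hx
    · split_ifs at h with hle <;> simp at h
      · rcases hx with hx | hx
        · exact le_of_eq (h.1 ▸ hx ▸ rfl)
        · exact h.1 ▸ le_trans hle (ih hem x hx)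
      · rcases hx with hx | hx
        · exact le_of_lt (h.1 ▸ hx ▸ lt_of_not_ge hle)
        · exact h.1 ▸ ih hem x hx

lemma extractMin_mem : ∀ {l : List ℝ} {m : ℝ} {rest : List ℝ},
    extractMin l = some (m, rest) → ∀ x ∈ rest, x ∈ l := by
  intro l
  induction l with
  | nil => intro m rest h; simp [extractMin] at h
  | cons a as ih =>
    intro m rest h x hx
    rw [extractMin] at h
    rcases hem : extractMin as with _ | ⟨m', rest'⟩ <;> rw [hem] at h <;> dsimp only at h
    · simp at h; rw [h.2] at hx; simp at hx
    · split_ifs at h with hle <;> simp at h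
      · rw [← h.2] at hx; simp [hx]
      · rw [← h.2, List.mem_cons] at hx
        rcases hx with hx | hx
        · simp [hx]
        · exact List.mem_cons_of_mem a (ih hem x hx)

lemma bfStep_inv (s : BfState) (b : ℝ)
    (h : ∀ a ∈ s.unmatchedAsks, ∀ c ∈ s.unmatchedBids, c < a) :
    ∀ a ∈ (bfStep s b).unmatchedAsks, ∀ c ∈ (bfStep s b).unmatchedBids, c < a := by
  rw [bfStep]
  rcases hem : extractMin s.unmatchedAsks with _ | ⟨m, rest⟩
  · intro a ha c hc
    simp at ha hc
    rcases hc with hc | hc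
    · exact h a ha c hc
    · subst hc
      rw [extractMin_eq_none.mp hem] at ha
      simp at ha
  · dsimp only
    split_ifs with hle
    · intro a ha c hc
      exact h a (extractMin_mem hem a ha) c hc
    · intro a ha c hc
      simp at hc
      rcases hc with hc | hc
      · exact h a ha c hc
      · subst hc
        exact lt_of_lt_of_le (lt_of_not_ge hle) (extractMin_min hem a ha)

lemma bfRun_inv_s5 (bids : List ℝ) (s : BfState)
    (h : ∀ a ∈ s.unmatchedAsks, ∀ c ∈ s.unmatchedBids, c < a) :
    ∀ a ∈ (bids.foldl bfStep s).unmatchedAsks,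
      ∀ c ∈ (bids.foldl bfStep s).unmatchedBids, c < a := by
  induction bids generalizing s with
  | nil => exact h
  | cons b bs ih => exact ih _ (bfStep_inv s b h)

/-- After the Best-first allocation has processed all bids,
every unmatched ask has value strictly greater than every unmatched bid. -/
theorem bf_unmatched_asks_gt_unmatched_bids (asks bids : List ℝ) :
    ∀ a ∈ (bfRun asks bids).unmatchedAsks, ∀ b ∈ (bfRun asks bids).unmatchedBids,
      b < a := by
  exact bfRun_inv_s5 bids ⟨asks, [], []⟩ (by simp)
end

section
/- In M_greedy, truthful valuation reporting is optimal for every buyer: fix the asks, the other bids and the arrival order, and consider a buyer with true value v arriving at a fixed position p; for every reported value v′ ≥ 0, the buyer's utility when reporting v (namely v minus the value of the minimum unmatched ask at his arrival if that ask's value is at most v, and 0 otherwise) is at least his utility when reporting v′ (namely v minus that same minimum unmatched ask's value if it is at most v′, and 0 otherwise). -/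
/-- Utility of a buyer with true value `trueV` who reports `report` and whose
bid arrives right after the bids `before` have been processed: he is matched
to the minimum unmatched ask `a` at his arrival iff `a ≤ report`, in which
case he pays `a`; otherwise his utility is 0. -/
noncomputable def buyerUtil (asks before : List ℝ) (report trueV : ℝ) : ℝ :=
  match extractMin (bfRun asks before).unmatchedAsks with
  | some (a, _) => if a ≤ report then trueV - a else 0
  | none => 0

/-- A bid of value `r` arriving right after the bids `before` is matched by
the Best-first allocation. -/
def bfMatchedAt (asks before : List ℝ) (r : ℝ) : Prop :=
  match extractMin (bfRun asks before).unmatchedAsks with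
  | some (a, _) => a ≤ r
  | none => False

/-- In `M_greedy`, truthful valuation reporting is optimal for
every buyer: fixing the asks and the bids `before` arriving before him, for
every reported value `v' ≥ 0` the buyer's utility when reporting his true
value `v` is at least his utility when reporting `v'`. -/
theorem buyer_truthful_valuation (asks before : List ℝ)
    (ha : ∀ a ∈ asks, 0 ≤ a) (hbef : ∀ b ∈ before, 0 ≤ b)
    (v v' : ℝ) (hv : 0 ≤ v) (hv' : 0 ≤ v') :
    buyerUtil asks before v' v ≤ buyerUtil asks before v v := by
  unfold buyerUtil
  cases h : extractMin (bfRun asks before).unmatchedAsks with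
  | none => simp
  | some p =>
    obtain ⟨a, rest⟩ := p
    simp only
    by_cases h1 : a ≤ v
    · simp [h1]
      by_cases h2 : a ≤ v'
      · simp [h2]
      · simp [h2]; linarith
    · simp [h1]
      by_cases h2 : a ≤ v'
      · simp [h2]; linarith
      · simp [h2]
end

section
/- In the Best-first allocation, a matched buyer's outcome is monotone and independent of his report among winning reports: fixing the asks, the other bids and the arrival order, if a bid of value v placed at position p is matched, then a bid of any value v′ ≥ v placed at the same position is also matched, and it is matched to an ask of the same value (the minimum unmatched ask at that arrival, which does not depend on the bid's own reported value), hence with the same payment in M_greedy. -/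
/-- The value of the ask matched to a bid of value `r` arriving right after the
bids `before` (`none` if the bid is left unmatched); this is also the buyer's
payment in `M_greedy`. -/
noncomputable def bfMatchedAskAt (asks before : List ℝ) (r : ℝ) : Option ℝ :=
  match extractMin (bfRun asks before).unmatchedAsks with
  | some (a, _) => if a ≤ r then some a else none
  | none => none

/-- In the Best-first allocation, a matched buyer's outcome
is monotone and report-independent among winning reports: if a bid of value
`v` placed at a position is matched, then a bid of any value `v' ≥ v` placed
at the same position is also matched, to an ask of the same value, hence with
the same payment in `M_greedy`. -/
theorem bf_buyer_monotone (asks before : List ℝ)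
    (ha : ∀ x ∈ asks, 0 ≤ x) (hbef : ∀ x ∈ before, 0 ≤ x)
    (v v' : ℝ) (hvv : v ≤ v')
    (hmatched : (bfMatchedAskAt asks before v).isSome) :
    (bfMatchedAskAt asks before v').isSome ∧
      bfMatchedAskAt asks before v' = bfMatchedAskAt asks before v := by
  unfold bfMatchedAskAt at *
  cases h : extractMin (bfRun asks before).unmatchedAsks with
  | none => simp [h] at hmatched
  | some p =>
    obtain ⟨a, r⟩ := p
    simp only [h] at hmatched ⊢
    by_cases hav : a ≤ v
    · have : a ≤ v' := le_trans hav hvv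
      simp [hav, this]
    · simp [hav] at hmatched
end

section
/- The Best-first allocation is monotone for sellers: fixing the bids, their arrival order, and the other asks, if a seller's ask is matched when reported with value v, then it is also matched when reported with any value v′ with 0 ≤ v′ ≤ v. -/
/-- An ask: a (value, seller id) pair. -/
abbrev Ask := ℝ × ℕ

/-- Extract the minimum-value unmatched ask, with a fixed tie-breaking rule
(earlier list positions are preferred). -/
noncomputable def extractMinA : List Ask → Option (Ask × List Ask)
  | [] => none
  | a :: as =>
    match extractMinA as with
    | none => some (a, [])
    | some (m, rest) => if a.1 ≤ m.1 then some (a, as) else some (m, a :: rest)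

/-- State of the Best-first (greedy) allocation with identified asks. -/
structure BfStateA where
  unmatchedAsks : List Ask
  matched : List (Ask × ℝ)
  unmatchedBids : List ℝ

/-- One step of the Best-first allocation: when bid `b` arrives, match it to
the minimum-value unmatched ask `a` if `a.1 ≤ b`; otherwise `b` stays unmatched. -/
noncomputable def bfStepA (s : BfStateA) (b : ℝ) : BfStateA :=
  match extractMinA s.unmatchedAsks with
  | some (a, rest) =>
      if a.1 ≤ b then ⟨rest, s.matched ++ [(a, b)], s.unmatchedBids⟩
      else ⟨s.unmatchedAsks, s.matched, s.unmatchedBids ++ [b]⟩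
  | none => ⟨s.unmatchedAsks, s.matched, s.unmatchedBids ++ [b]⟩

/-- Run the Best-first allocation on the bids in arrival order. -/
noncomputable def bfRunA (asks : List Ask) (bids : List ℝ) : BfStateA :=
  bids.foldl bfStepA ⟨asks, [], []⟩

/-- The ask of seller `id` is matched. -/
def askMatched (st : BfStateA) (id : ℕ) : Prop := ∃ p ∈ st.matched, p.1.2 = id

/-- Highest value among the unmatched bids (0 if there is none). -/
noncomputable def maxBid (l : List ℝ) : ℝ := l.foldr max 0

/-- The `j`-th matched pair is reachable from the last matched pair:
for every `j ≤ m < last`, the `(m+1)`-st matched ask and the `m`-th matched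
bid are matchable. -/
def ReachableFromLast (m : List (Ask × ℝ)) (j : ℕ) : Prop :=
  ∀ i, j ≤ i → i + 1 < m.length → (m.getD (i + 1) default).1.1 ≤ (m.getD i default).2

open scoped Classical in
/-- Payment of the seller whose pair is the `j`-th matched pair:
`min(v(ā_min), max(v(b_last), v(b̄_max)))` if her pair is reachable from the
last matched pair, and `max(v(a_last), v(b̄_max))` otherwise (`v(ā_min) = +∞`
if there is no unmatched ask, handled by dropping the `min`;
`v(b̄_max) = 0` if there is no unmatched bid). -/
noncomputable def sellerPayAt (st : BfStateA) (j : ℕ) : ℝ :=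
  let m := st.matched
  let blast : ℝ := ((m.getLast?).map Prod.snd).getD 0
  let alast : ℝ := ((m.getLast?).map (fun p => p.1.1)).getD 0
  let bmax : ℝ := maxBid st.unmatchedBids
  if ReachableFromLast m j then
    match extractMinA st.unmatchedAsks with
    | some (amin, _) => min amin.1 (max blast bmax)
    | none => max blast bmax
  else max alast bmax

/-- Payment received by seller `id` (0 if her ask is unmatched). -/
noncomputable def sellerPay (st : BfStateA) (id : ℕ) : ℝ :=
  match st.matched.findIdx? (fun p => p.1.2 == id) with
  | some j => sellerPayAt st j
  | none => 0

open scoped Classical in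
/-- Utility of seller `id` with true value `trueV` in `M_greedy`. -/
noncomputable def sellerUtil (asks : List Ask) (bids : List ℝ) (id : ℕ) (trueV : ℝ) : ℝ :=
  let st := bfRunA asks bids
  if askMatched st id then sellerPay st id - trueV else 0

/-- Insert an ask at a given position of the ask list. -/
def insertAskAt (l : List Ask) (pos : ℕ) (x : Ask) : List Ask :=
  l.take pos ++ x :: l.drop pos

lemma extractMinA_none : ∀ {l : List Ask}, extractMinA l = none → l = [] := by
  intro l h
  cases l with
  | nil => rfl
  | cons a as =>
    rw [extractMinA] at h
    split at h
    · simp at h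
    · split at h <;> simp at h

lemma extractMinA_spec : ∀ (l : List Ask) (m : Ask) (r : List Ask),
    extractMinA l = some (m, r) → m ∈ l ∧ (∀ q ∈ l, m.1 ≤ q.1) ∧ (∀ q ∈ r, q ∈ l) := by
  intro l
  induction l with
  | nil => intro m r h; simp [extractMinA] at h
  | cons a as ih =>
    intro m r h
    rw [extractMinA] at h
    split at h
    · rename_i heq
      have has : as = [] := extractMinA_none heq
      simp at h
      obtain ⟨rfl, rfl⟩ := h
      subst has
      simp
    · rename_i m' r' heq
      obtain ⟨hm, hmin, hsub⟩ := ih m' r' heq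
      split at h
      · rename_i hle
        simp at h
        obtain ⟨rfl, rfl⟩ := h
        refine ⟨by simp, ?_, fun q hq => by simp [hq]⟩
        intro q hq
        rcases List.mem_cons.1 hq with rfl | hq
        · exact le_refl _
        · exact le_trans hle (hmin q hq)
      · rename_i hlt
        simp at h
        obtain ⟨rfl, rfl⟩ := h
        push_neg at hlt
        refine ⟨by simp [hm], ?_, ?_⟩
        · intro q hq
          rcases List.mem_cons.1 hq with rfl | hq
          · exact le_of_lt hlt
          · exact hmin q hq
        · intro q hq
          rcases List.mem_cons.1 hq with rfl | hq
          · simp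
          · simp [hsub q hq]

lemma extractMinA_cons_some (a : Ask) {as : List Ask} {m : Ask} {r : List Ask}
    (h : extractMinA as = some (m, r)) :
    extractMinA (a :: as) = if a.1 ≤ m.1 then some (a, as) else some (m, a :: r) := by
  rw [extractMinA, h]

lemma extractMinA_tri (x x' : Ask) (hx : x'.1 ≤ x.1) :
    ∀ (t₁ t₂ : List Ask),
    (extractMinA (t₁ ++ x :: t₂) = some (x, t₁ ++ t₂) ∧
     extractMinA (t₁ ++ x' :: t₂) = some (x', t₁ ++ t₂)) ∨
    (∃ m r₁ r₂, extractMinA (t₁ ++ x :: t₂) = some (m, r₁ ++ x :: r₂) ∧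
       extractMinA (t₁ ++ x' :: t₂) = some (m, r₁ ++ x' :: r₂) ∧
       m.1 ≤ x'.1 ∧ m ∈ t₁ ++ t₂ ∧ ∀ q ∈ r₁ ++ r₂, q ∈ t₁ ++ t₂) ∨
    (∃ m r₁ r₂, extractMinA (t₁ ++ x :: t₂) = some (m, r₁ ++ x :: r₂) ∧
       extractMinA (t₁ ++ x' :: t₂) = some (x', t₁ ++ t₂) ∧
       x'.1 ≤ m.1 ∧ m ∈ t₁ ++ t₂) := by
  intro t₁
  induction t₁ with
  | nil =>
    intro t₂
    simp only [List.nil_append]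
    rcases h' : extractMinA t₂ with _ | ⟨m, r⟩
    · have ht : t₂ = [] := extractMinA_none h'
      subst ht
      left
      constructor <;> simp [extractMinA]
    · obtain ⟨hm, hmin, hsub⟩ := extractMinA_spec t₂ m r h'
      rw [extractMinA_cons_some x h', extractMinA_cons_some x' h']
      by_cases h1 : x.1 ≤ m.1
      · have h2 : x'.1 ≤ m.1 := le_trans hx h1
        left
        simp [h1, h2]
      · by_cases h2 : x'.1 ≤ m.1
        · right; right
          refine ⟨m, [], r, by simp [h1], by simp [h2], h2, hm⟩
        · right; left
          push_neg at h2
          refine ⟨m, [], r, by simp [h1], by simp [not_le.2 h2], le_of_lt h2, hm, by simpa using hsub⟩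
  | cons a t ih =>
    intro t₂
    rcases ih t₂ with ⟨h1, h2⟩ | ⟨m, r₁, r₂, h1, h2, hmx, hmem, hsub⟩ | ⟨m, r₁, r₂, h1, h2, hxm, hmem⟩
    · -- case (i)
      simp only [List.cons_append]
      rw [extractMinA_cons_some a h1, extractMinA_cons_some a h2]
      by_cases ha1 : a.1 ≤ x'.1
      · have ha2 : a.1 ≤ x.1 := le_trans ha1 hx
        right; left
        refine ⟨a, t, t₂, by simp [ha2], by simp [ha1], ha1, by simp, ?_⟩
        intro q hq
        simp only [List.mem_append, List.mem_cons] at hq ⊢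
        tauto
      · by_cases ha2 : a.1 ≤ x.1
        · right; right
          refine ⟨a, t, t₂, by simp [ha2], ?_, le_of_not_ge ha1, by simp⟩
          simp [ha1]
        · left
          constructor
          · simp [ha2]
          · have : ¬ a.1 ≤ x'.1 := ha1
            simp [this]
    · -- case (ii)
      simp only [List.cons_append]
      rw [extractMinA_cons_some a h1, extractMinA_cons_some a h2]
      by_cases ha : a.1 ≤ m.1
      · right; left
        refine ⟨a, t, t₂, by simp [ha], by simp [ha], le_trans ha hmx, by simp, ?_⟩
        intro q hq
        simp only [List.mem_append, List.mem_cons] at hq ⊢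
        tauto
      · right; left
        refine ⟨m, a :: r₁, r₂, by simp [ha], by simp [ha], hmx, ?_, ?_⟩
        · simp only [List.cons_append, List.mem_cons]
          right
          exact hmem
        · intro q hq
          simp only [List.cons_append, List.mem_cons] at hq ⊢
          rcases hq with rfl | hq
          · left; rfl
          · right; exact hsub q hq
    · -- case (iii)
      simp only [List.cons_append]
      rw [extractMinA_cons_some a h1, extractMinA_cons_some a h2]
      by_cases ha1 : a.1 ≤ x'.1
      · have ha2 : a.1 ≤ m.1 := le_trans ha1 hxm
        right; left
        refine ⟨a, t, t₂, by simp [ha2], by simp [ha1], ha1, by simp, ?_⟩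
        intro q hq
        simp only [List.mem_append, List.mem_cons] at hq ⊢
        tauto
      · by_cases ha2 : a.1 ≤ m.1
        · right; right
          refine ⟨a, t, t₂, by simp [ha2], by simp [ha1], le_of_not_ge ha1, by simp⟩
        · right; right
          refine ⟨m, a :: r₁, r₂, by simp [ha2], ?_, hxm, ?_⟩
          · have : ¬ a.1 ≤ x'.1 := ha1
            simp [this]
          · simp only [List.cons_append, List.mem_cons]
            right
            exact hmem

lemma askMatched_step {s : BfStateA} {b : ℝ} {id : ℕ} (h : askMatched s id) :
    askMatched (bfStepA s b) id := by
  obtain ⟨p, hp, hpe⟩ := h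
  unfold bfStepA
  split
  · split
    · exact ⟨p, List.mem_append_left _ hp, hpe⟩
    · exact ⟨p, hp, hpe⟩
  · exact ⟨p, hp, hpe⟩

def SellerInv (myId : ℕ) (v v' : ℝ) (s s' : BfStateA) : Prop :=
  askMatched s' myId ∨
    (¬ askMatched s myId ∧ ∃ t₁ t₂,
      s.unmatchedAsks = t₁ ++ ((v, myId) : Ask) :: t₂ ∧
      s'.unmatchedAsks = t₁ ++ ((v', myId) : Ask) :: t₂ ∧
      ∀ q ∈ t₁ ++ t₂, q.2 ≠ myId)

lemma step_inv {myId : ℕ} {v v' : ℝ} (hvv : v' ≤ v) (b : ℝ) (s s' : BfStateA)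
    (h : SellerInv myId v v' s s') : SellerInv myId v v' (bfStepA s b) (bfStepA s' b) := by
  rcases h with h | ⟨hnm, t₁, t₂, hl, hl', hids⟩
  · exact Or.inl (askMatched_step h)
  rcases extractMinA_tri (v, myId) (v', myId) hvv t₁ t₂ with
    ⟨h1, h2⟩ | ⟨m, r₁, r₂, h1, h2, hmx, hmem, hsub⟩ | ⟨m, r₁, r₂, h1, h2, hxm, hmem⟩
  · -- both would extract the special ask
    by_cases hb : v' ≤ b
    · left
      unfold bfStepA
      rw [hl', h2]
      simp only [hb, if_true]
      exact ⟨((v', myId), b), List.mem_append_right _ (by simp), rfl⟩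
    · right
      have hbv : ¬ v ≤ b := fun hc => hb (le_trans hvv hc)
      unfold bfStepA
      rw [hl, h1, hl', h2]
      simp only [hb, hbv, if_false]
      exact ⟨hnm, t₁, t₂, rfl, rfl, hids⟩
  · -- both would extract the same other ask m
    by_cases hb : m.1 ≤ b
    · right
      unfold bfStepA
      rw [hl, h1, hl', h2]
      simp only [hb, if_true]
      refine ⟨?_, r₁, r₂, rfl, rfl, fun q hq => hids q (hsub q hq)⟩
      rintro ⟨p, hp, hpe⟩
      rcases List.mem_append.1 hp with hp | hp
      · exact hnm ⟨p, hp, hpe⟩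
      · simp at hp
        subst hp
        exact hids m hmem hpe
    · right
      unfold bfStepA
      rw [hl, h1, hl', h2]
      simp only [hb, if_false]
      exact ⟨hnm, t₁, t₂, rfl, rfl, hids⟩
  · -- s would extract m, s' would extract the special ask
    by_cases hb : v' ≤ b
    · left
      unfold bfStepA
      rw [hl', h2]
      simp only [hb, if_true]
      exact ⟨((v', myId), b), List.mem_append_right _ (by simp), rfl⟩
    · right
      have hbm : ¬ m.1 ≤ b := fun hc => hb (le_trans hxm hc)
      unfold bfStepA
      rw [hl, h1, hl', h2]
      simp only [hb, hbm, if_false]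
      exact ⟨hnm, t₁, t₂, rfl, rfl, hids⟩

lemma run_inv {myId : ℕ} {v v' : ℝ} (hvv : v' ≤ v) :
    ∀ (bids : List ℝ) (s s' : BfStateA), SellerInv myId v v' s s' →
      SellerInv myId v v' (bids.foldl bfStepA s) (bids.foldl bfStepA s') := by
  intro bids
  induction bids with
  | nil => intro s s' h; exact h
  | cons b bs ih =>
    intro s s' h
    exact ih _ _ (step_inv hvv b s s' h)

/-- The Best-first allocation is monotone for sellers:
fixing the bids, the other asks, and her ask's position, if a seller's ask is
matched when reported with value `v`, then it is also matched when reported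
with any value `v'` with `0 ≤ v' ≤ v`. -/
theorem bf_seller_monotone (bids : List ℝ) (otherAsks : List Ask)
    (pos myId : ℕ) (hid : ∀ p ∈ otherAsks, p.2 ≠ myId)
    (hb : ∀ b ∈ bids, 0 ≤ b) (ha : ∀ p ∈ otherAsks, 0 ≤ p.1)
    (v v' : ℝ) (hv' : 0 ≤ v') (hvv : v' ≤ v)
    (hmatched : askMatched (bfRunA (insertAskAt otherAsks pos (v, myId)) bids) myId) :
    askMatched (bfRunA (insertAskAt otherAsks pos (v', myId)) bids) myId := by
  have hinit : SellerInv myId v v' ⟨insertAskAt otherAsks pos (v, myId), [], []⟩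
      ⟨insertAskAt otherAsks pos (v', myId), [], []⟩ := by
    right
    refine ⟨by simp [askMatched], otherAsks.take pos, otherAsks.drop pos, rfl, rfl, ?_⟩
    intro q hq
    rcases List.mem_append.1 hq with hq | hq
    · exact hid q (List.mem_of_mem_take hq)
    · exact hid q (List.mem_of_mem_drop hq)
  have := run_inv hvv bids _ _ hinit
  rcases this with h | ⟨hnm, _⟩
  · exact h
  · exact absurd hmatched hnm
end
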